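/- Let N = (ℚ/ℤ)^r for some r ≥ 1, with the natural action of the profinite group Ẑ^× by multiplication (homotheties), and let G be a closed subgroup of Ẑ^× such that the quotient Ẑ^×/G has finite exponent. Then the fixed-point group H^0(G, N) is finite and the continuous cohomology group H^1(G, N) has finite exponent. -/

import Mathlib

open scoped DirectSum

instance (p : Nat.Primes) : Fact (p : ℕ).Prime := ⟨p.2⟩

/-- The profinite completion `Ẑ` of `ℤ`, realized (via CRT) as the product of all rings
of `p`-adic integers. -/
abbrev Zhat : Type := ∀ p : Nat.Primes, ℤ_[(p : ℕ)]

/-- `ℤ_p` as a submodule of `ℚ_p`. -/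
noncomputable def Zp (p : Nat.Primes) : Submodule ℤ_[(p : ℕ)] ℚ_[(p : ℕ)] :=
  LinearMap.range (Algebra.linearMap ℤ_[(p : ℕ)] ℚ_[(p : ℕ)])

/-- The `p`-primary component `ℚ_p/ℤ_p` of `ℚ/ℤ`. -/
abbrev QmodZp (p : Nat.Primes) := ℚ_[(p : ℕ)] ⧸ Zp p

/-- `ℚ_p/ℤ_p` is a module over `Ẑ` via the projection `Ẑ → ℤ_p`. -/
noncomputable instance (p : Nat.Primes) : Module Zhat (QmodZp p) :=
  Module.compHom _ (Pi.evalRingHom (fun p : Nat.Primes => ℤ_[(p : ℕ)]) p)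

/-- `ℚ/ℤ ≅ ⨁_p ℚ_p/ℤ_p` as a module over `Ẑ`; the units `Ẑˣ` act by homotheties. -/
abbrev QZ : Type := ⨁ p : Nat.Primes, QmodZp p

namespace Aux

variable {p : ℕ} [hp : Fact p.Prime]

lemma isUnit_natCast_padic {n : ℕ} (h : ¬ p ∣ n) : IsUnit (n : ℤ_[p]) := by
  rw [PadicInt.isUnit_iff]
  refine le_antisymm ((n : ℤ_[p]).2) (not_lt.1 fun hlt => h ?_)
  have : ‖((n : ℤ) : ℤ_[p])‖ < 1 := by exact_mod_cast hlt
  rw [PadicInt.norm_int_lt_one_iff_dvd] at this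
  exact_mod_cast this

lemma isUnit_of_toZMod_ne_zero {x : ℤ_[p]} (h : PadicInt.toZMod x ≠ 0) : IsUnit x := by
  rw [← IsLocalRing.notMem_maximalIdeal, ← PadicInt.ker_toZMod, RingHom.mem_ker]
  exact h

lemma exists_unit_big {d : ℕ} (hd : 0 < d) (hpd : d + 1 < p) :
    ∃ u : ℤ_[p]ˣ, IsUnit ((u : ℤ_[p]) ^ d - 1) := by
  obtain ⟨g, hg⟩ := IsCyclic.exists_generator (α := (ZMod p)ˣ)
  have horder : orderOf g = p - 1 := by
    rw [orderOf_eq_card_of_forall_mem_zpowers hg, Nat.card_eq_fintype_card, ZMod.card_units]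
  have hgd : (g : ZMod p) ^ d ≠ 1 := by
    intro h1
    have h2 : g ^ d = 1 := by ext; push_cast; exact h1
    have h3 := orderOf_dvd_of_pow_eq_one h2
    rw [horder] at h3
    have := Nat.le_of_dvd hd h3
    omega
  set k := (g : ZMod p).val with hk
  have hkg : ((k : ℕ) : ZMod p) = (g : ZMod p) := ZMod.natCast_zmod_val _
  have hpk : ¬ p ∣ k := by
    intro hdvd
    have h0 : ((k : ℕ) : ZMod p) = 0 := (ZMod.natCast_eq_zero_iff _ _).2 hdvd
    rw [hkg] at h0
    exact g.ne_zero h0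
  obtain ⟨u, hu⟩ := isUnit_natCast_padic hpk
  refine ⟨u, isUnit_of_toZMod_ne_zero ?_⟩
  rw [hu]
  have hmap : PadicInt.toZMod ((k : ℤ_[p]) ^ d - 1) = ((k : ℕ) : ZMod p) ^ d - 1 := by
    rw [map_sub, map_pow, map_natCast, map_one]
  rw [hmap, hkg]
  intro h0
  exact hgd (by linear_combination h0)

lemma exists_unit_small {d : ℕ} (hd : 0 < d) :
    ∃ u : ℤ_[p]ˣ, ∃ e : ℕ, ∃ v : ℤ_[p]ˣ, (u : ℤ_[p]) ^ d - 1 = (p : ℤ_[p]) ^ e * v := by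
  have hpu : ¬ p ∣ 1 + p := by
    intro h
    have h1 : p ∣ 1 := (Nat.dvd_add_right (dvd_refl p)).1 (by rwa [add_comm] at h)
    have := Nat.le_of_dvd one_pos h1
    have := hp.1.two_le
    omega
  obtain ⟨u, hu⟩ := isUnit_natCast_padic hpu
  have hx : ((1 + p : ℕ) : ℤ_[p]) ^ d - 1 ≠ 0 := by
    rw [sub_ne_zero]
    intro h1
    have h3 : (1 + p) ^ d = 1 := by exact_mod_cast h1
    have h4 : 2 ≤ (1 + p) ^ d := le_trans (by have := hp.1.two_le; omega) (Nat.le_self_pow hd.ne' _)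
    omega
  exact ⟨u, _, PadicInt.unitCoeff hx,
    by rw [hu]; exact (PadicInt.unitCoeff_spec hx).trans (mul_comm _ _)⟩

lemma exists_unit (d : ℕ) (hd : 0 < d) :
    ∃ u : ℤ_[p]ˣ, ∃ e : ℕ, ∃ v : ℤ_[p]ˣ,
      (u : ℤ_[p]) ^ d - 1 = (p : ℤ_[p]) ^ e * v ∧ (d + 1 < p → e = 0) := by
  rcases lt_or_ge (d + 1) p with hbig | hsmall
  · obtain ⟨u, hu⟩ := exists_unit_big hd hbig
    exact ⟨u, 0, hu.unit, by rw [pow_zero, one_mul, IsUnit.unit_spec], fun _ => rfl⟩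
  · obtain ⟨u, e, v, huv⟩ := exists_unit_small (p := p) hd
    exact ⟨u, e, v, huv, fun h => absurd h (by omega)⟩

lemma key_exists (d : ℕ) (hd : 0 < d) :
    ∃ u : (Zhat)ˣ, ∃ m : ℕ, 0 < m ∧ ∃ w : Zhat, w * ((u : Zhat) ^ d - 1) = (m : Zhat) := by
  classical
  choose U E V hUV hE using fun p : Nat.Primes => Aux.exists_unit (p := (p : ℕ)) d hd
  set E' : ℕ → ℕ := fun q => if h : q.Prime then E ⟨q, h⟩ else 0 with hE'
  set S := (d + 2).primesBelow with hS
  set m := ∏ q ∈ S, q ^ E' q with hm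
  have hmpos : 0 < m :=
    Finset.prod_pos fun q hq => pow_pos (Nat.prime_of_mem_primesBelow hq).pos _
  have hfac : ∀ p : Nat.Primes, ∃ c : ℕ, m = (p : ℕ) ^ E p * c ∧ ¬ (p : ℕ) ∣ c := by
    intro p
    by_cases hpS : (p : ℕ) ∈ S
    · refine ⟨∏ q ∈ S.erase (p : ℕ), q ^ E' q, ?_, ?_⟩
      · rw [hm, ← Finset.mul_prod_erase S _ hpS]
        congr 1
        simp only [hE', dif_pos p.2]
        rfl
      · intro hdvd
        obtain ⟨q, hq, hq2⟩ := (Nat.Prime.prime p.2).exists_mem_finset_dvd hdvd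
        have hqp : q.Prime := Nat.prime_of_mem_primesBelow (Finset.mem_of_mem_erase hq)
        have heq : (p : ℕ) = q :=
          (Nat.prime_dvd_prime_iff_eq p.2 hqp).1 (p.2.dvd_of_dvd_pow hq2)
        exact (Finset.ne_of_mem_erase hq) heq.symm
    · have hple : ¬ ((p : ℕ) < d + 2) := fun hlt => hpS (Nat.mem_primesBelow.2 ⟨hlt, p.2⟩)
      have he0 : E p = 0 := hE p (by omega)
      refine ⟨m, by rw [he0, pow_zero, one_mul], ?_⟩
      intro hdvd
      obtain ⟨q, hq, hq2⟩ := (Nat.Prime.prime p.2).exists_mem_finset_dvd hdvd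
      have hqp := Nat.prime_of_mem_primesBelow hq
      have hql := Nat.lt_of_mem_primesBelow hq
      have heq : (p : ℕ) = q :=
        (Nat.prime_dvd_prime_iff_eq p.2 hqp).1 (p.2.dvd_of_dvd_pow hq2)
      omega
  choose c hc1 hc2 using hfac
  refine ⟨⟨fun p => U p, fun p => ((U p)⁻¹ : ℤ_[(p : ℕ)]ˣ),
      funext fun p => Units.mul_inv _, funext fun p => Units.inv_mul _⟩,
    m, hmpos, fun p => (c p : ℤ_[(p : ℕ)]) * (((V p)⁻¹ : ℤ_[(p : ℕ)]ˣ) : ℤ_[(p : ℕ)]), ?_⟩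
  funext p
  show (c p : ℤ_[(p : ℕ)]) * (((V p)⁻¹ : ℤ_[(p : ℕ)]ˣ) : ℤ_[(p : ℕ)]) *
      ((U p : ℤ_[(p : ℕ)]) ^ d - 1) = (m : ℤ_[(p : ℕ)])
  have h1 : (m : ℤ_[(p : ℕ)]) = ((p : ℕ) : ℤ_[(p : ℕ)]) ^ E p * (c p : ℤ_[(p : ℕ)]) := by
    rw [hc1 p]; push_cast; ring
  rw [hUV p, h1]
  linear_combination (((p : ℕ) : ℤ_[(p : ℕ)]) ^ E p * (c p : ℤ_[(p : ℕ)])) * Units.inv_mul (V p)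

end Aux

set_option maxHeartbeats 1000000

namespace Tor

lemma tor_zero (p : Nat.Primes) {m : ℕ} (h : ¬ (p : ℕ) ∣ m) {y : QmodZp p} (hy : m • y = 0) :
    y = 0 := by
  obtain ⟨cu, hcu⟩ := Aux.isUnit_natCast_padic (p := (p : ℕ)) h
  have h1 : ((m : ℤ_[(p : ℕ)])) • y = 0 := by rw [Nat.cast_smul_eq_nsmul]; exact hy
  have h2 : ((cu⁻¹ : ℤ_[(p : ℕ)]ˣ) : ℤ_[(p : ℕ)]) • ((m : ℤ_[(p : ℕ)]) • y) = y := by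
    rw [smul_smul, ← hcu, Units.inv_mul, one_smul]
  rw [h1, smul_zero] at h2
  exact h2.symm

lemma tor_finite (p : Nat.Primes) {m : ℕ} (hm : 0 < m) :
    {y : QmodZp p | m • y = 0}.Finite := by
  have hm0 : (m : ℚ_[(p : ℕ)]) ≠ 0 := Nat.cast_ne_zero.2 hm.ne'
  have hsub : {y : QmodZp p | m • y = 0} ⊆
      (fun k : ℕ => Submodule.Quotient.mk (p := Zp p) ((k : ℚ_[(p : ℕ)]) / (m : ℚ_[(p : ℕ)]))) ''
        (Set.Iio m) := by
    intro y hy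
    obtain ⟨q, rfl⟩ := Submodule.Quotient.mk_surjective _ y
    simp only [Set.mem_setOf_eq] at hy
    have h0 : ((m : ℚ_[(p : ℕ)]) * q) ∈ Zp p := by
      rw [← Submodule.Quotient.mk_eq_zero (Zp p), ← nsmul_eq_mul, ← Submodule.mkQ_apply,
        map_nsmul, Submodule.mkQ_apply, hy]
    have h0' : ((m : ℚ_[(p : ℕ)]) * q)
        ∈ LinearMap.range (Algebra.linearMap ℤ_[(p : ℕ)] ℚ_[(p : ℕ)]) := h0
    obtain ⟨z, hz⟩ := LinearMap.mem_range.1 h0'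
    rw [Algebra.linearMap_apply, PadicInt.algebraMap_apply] at hz
    set e := m.factorization (p : ℕ) with he
    have hk : z.appr e < m :=
      lt_of_lt_of_le (PadicInt.appr_lt z e) (Nat.le_of_dvd hm (Nat.ordProj_dvd m (p : ℕ)))
    refine ⟨z.appr e, hk, ?_⟩
    rw [Submodule.Quotient.eq]
    obtain ⟨t, ht⟩ := Ideal.mem_span_singleton.1 (PadicInt.appr_spec e z)
    obtain ⟨cu, hcu⟩ := Aux.isUnit_natCast_padic (p := (p : ℕ)) (n := m / (p : ℕ) ^ e)
      (by rw [he]; exact Nat.not_dvd_ordCompl p.2 hm.ne')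
    have hZ : (t * ((cu⁻¹ : ℤ_[(p : ℕ)]ˣ) : ℤ_[(p : ℕ)])) * (m : ℤ_[(p : ℕ)])
        = z - (z.appr e : ℤ_[(p : ℕ)]) := by
      have hnat : m = (p : ℕ) ^ e * (m / (p : ℕ) ^ e) := by
        rw [he]; exact (Nat.ordProj_mul_ordCompl_eq_self m (p : ℕ)).symm
      have hmfac : (m : ℤ_[(p : ℕ)])
          = ((p : ℕ) : ℤ_[(p : ℕ)]) ^ e * ((m / (p : ℕ) ^ e : ℕ) : ℤ_[(p : ℕ)]) := by
        conv_lhs => rw [hnat]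
        push_cast
        ring
      rw [hmfac, ← hcu]
      linear_combination (((p : ℕ) : ℤ_[(p : ℕ)]) ^ e * t) * Units.inv_mul cu - ht
    have hmem : (z.appr e : ℚ_[(p : ℕ)]) / (m : ℚ_[(p : ℕ)]) - q
        ∈ LinearMap.range (Algebra.linearMap ℤ_[(p : ℕ)] ℚ_[(p : ℕ)]) := by
      refine ⟨-(t * ((cu⁻¹ : ℤ_[(p : ℕ)]ˣ) : ℤ_[(p : ℕ)])), ?_⟩
      rw [Algebra.linearMap_apply, PadicInt.algebraMap_apply]
      have hq : q = (z : ℚ_[(p : ℕ)]) / (m : ℚ_[(p : ℕ)]) := by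
        rw [eq_div_iff hm0]; linear_combination - hz
      have hZQ := congrArg (fun x : ℤ_[(p : ℕ)] => (x : ℚ_[(p : ℕ)])) hZ
      push_cast at hZQ
      rw [hq, div_sub_div_same, eq_div_iff hm0]
      push_cast
      linear_combination - hZQ
    exact hmem
  exact Set.Finite.subset (Set.Finite.image _ (Set.finite_Iio m)) hsub

lemma smul_apply_nat (n : ℕ) (x : QZ) (p : Nat.Primes) : (n • x) p = n • (x p) := by
  induction n with
  | zero => simp
  | succ k ih => simp [succ_nsmul, ih]

lemma torQZ_finite {m : ℕ} (hm : 0 < m) : {x : QZ | m • x = 0}.Finite := by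
  classical
  have hPfin : Finite {p : Nat.Primes // (p : ℕ) ∣ m} := by
    refine Finite.of_injective
      (fun p => (⟨(p.1 : ℕ), Nat.lt_succ_of_le (Nat.le_of_dvd hm p.2)⟩ : Fin (m + 1))) ?_
    intro a b hab
    apply Subtype.ext
    apply Subtype.ext
    exact congrArg Fin.val hab
  have hzero : ∀ x ∈ {x : QZ | m • x = 0}, ∀ p : Nat.Primes, ¬ (p : ℕ) ∣ m → x p = 0 := by
    intro x hx p hp
    refine tor_zero p hp ?_
    rw [← smul_apply_nat m x p, show m • x = 0 from hx]
    simp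
  refine Set.Finite.of_finite_image
    (f := fun x (q : {p : Nat.Primes // (p : ℕ) ∣ m}) => x q.1) ?_ ?_
  · refine Set.Finite.subset (Set.Finite.pi
      (t := fun q : {p : Nat.Primes // (p : ℕ) ∣ m} => {y : QmodZp q.1 | m • y = 0})
      (fun q => tor_finite q.1 hm)) ?_
    rintro _ ⟨x, hx, rfl⟩
    intro q _
    show m • (x q.1) = 0
    rw [← smul_apply_nat m x q.1, show m • x = 0 from hx]
    simp
  · intro x hx y hy hxy
    refine DFinsupp.ext fun p => ?_
    by_cases hp : (p : ℕ) ∣ m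
    · exact congrFun hxy ⟨p, hp⟩
    · rw [hzero x hx p hp, hzero y hy p hp]

end Tor

/-- Let `N = (ℚ/ℤ)^r` (`r ≥ 1`) with `Ẑˣ` acting by homotheties, and let
`G` be a closed subgroup of `Ẑˣ` of finite coexponent (`Ẑˣ/G` has finite exponent, i.e.
`∃ d > 0, ∀ u, u ^ d ∈ G`).  Then `H⁰(G, N)` is finite and the continuous cohomology
group `H¹(G, N)` has finite exponent (every class killed by a uniform `m > 0`; classes
are represented by locally constant cocycles `G → N`, `N` being discrete). -/
theorem h0_finite_and_h1_finite_exponent_of_finite_coexponent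
    (r : ℕ) (hr : 1 ≤ r)
    (G : Subgroup (Zhat)ˣ) (hG_closed : IsClosed (G : Set (Zhat)ˣ))
    (hG_coexp : ∃ d : ℕ, 0 < d ∧ ∀ u : (Zhat)ˣ, u ^ d ∈ G) :
    ({x : Fin r → QZ | ∀ g ∈ G, g • x = x}.Finite) ∧
      (∃ m : ℕ, 0 < m ∧ ∀ f : G → (Fin r → QZ), IsLocallyConstant f →
        (∀ g h : G, f (g * h) = f g + (g : (Zhat)ˣ) • f h) →
        ∃ x : Fin r → QZ, ∀ g : G, m • f g = (g : (Zhat)ˣ) • x - x) := by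
  obtain ⟨d, hd, hpow⟩ := hG_coexp
  obtain ⟨u, m, hm, w, hw⟩ := Aux.key_exists d hd
  set s : (Zhat)ˣ := u ^ d with hs
  have hsG : s ∈ G := hpow u
  have hsw : w * ((s : Zhat) - 1) = (m : Zhat) := by
    rw [hs, Units.val_pow_eq_pow_val]; exact hw
  have hkey : ∀ y : Fin r → QZ, w • ((s : Zhat) • y - y) = m • y := by
    intro y
    calc w • ((s : Zhat) • y - y) = w • (((s : Zhat) - 1) • y) :=
      congrArg (w • ·) ((congrArg (fun z => (s : Zhat) • y - z) (one_smul Zhat y).symm).trans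
        (sub_smul (s : Zhat) 1 y).symm)
    _ = (w * ((s : Zhat) - 1)) • y := (mul_smul _ _ _).symm
    _ = ((m : ℕ) : Zhat) • y := by rw [hsw]
    _ = m • y := Nat.cast_smul_eq_nsmul _ _ _
  constructor
  · refine Set.Finite.subset (Set.Finite.pi (fun _ : Fin r => Tor.torQZ_finite hm)) ?_
    intro x hx
    have hfix : (s : Zhat) • x = x := hx s hsG
    have hx0 : m • x = 0 := by
      rw [← hkey x, hfix, sub_self, smul_zero]
    intro i _
    show m • (x i) = 0
    have hpi : ∀ (n : ℕ) (y : Fin r → QZ), (n • y) i = n • (y i) := by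
      intro n y
      induction n with
      | zero => simp
      | succ k ih => simp [succ_nsmul, ih]
    rw [← hpi m x, hx0]
    simp
  · refine ⟨m, hm, fun f _ hcoc => ?_⟩
    set σ : G := ⟨s, hsG⟩ with hσ
    refine ⟨w • f σ, fun g => ?_⟩
    have hcomm : f g + (g : (Zhat)ˣ) • f σ = f σ + ((σ : (Zhat)ˣ)) • f g := by
      rw [← hcoc g σ, ← hcoc σ g, mul_comm]
    have h1 : (g : (Zhat)ˣ) • (w • f σ) = w • ((g : (Zhat)ˣ) • f σ) := by
      rw [Units.smul_def, Units.smul_def, smul_smul, smul_smul, mul_comm]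
    have h3 : ((σ : (Zhat)ˣ)) • f g = (s : Zhat) • f g := rfl
    have h2 : (g : (Zhat)ˣ) • f σ - f σ = (s : Zhat) • f g - f g := by
      rw [← h3, sub_eq_sub_iff_add_eq_add, add_comm, add_comm (((σ : (Zhat)ˣ)) • f g)]
      exact hcomm
    rw [h1]
    exact ((smul_sub w _ _).symm.trans ((congrArg (w • ·) h2).trans (hkey (f g)))).symm
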